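/- arXiv:2006.13409 — 2 statements merged into one kernel-verified Lean document; each statement's English description precedes it below -/
import Mathlib

section
/- For each fixed k, the coefficients p_{k,s}^{(d)} in the expansion Q_k^{(d)}(x) = Σ_{s=0}^k p_{k,s}^{(d)} x^s of the k-th Gegenbauer polynomial (normalized so Q_k^{(d)}(d) = 1, orthogonal with respect to the distribution of √d⟨x,e_1⟩ for x uniform on the sphere of radius √d in R^d) satisfy p_{k,s}^{(d)} = O(d^{-k/2 - s/2}) as d → ∞. -/
open MeasureTheory Polynomial Filter

/-- `Q : ℕ → Polynomial ℝ` is the family of Gegenbauer polynomials in dimension `d`: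
`Q k` has degree `k`, is normalized by `Q k (d) = 1`, and the family is orthogonal with
respect to the law of `√d⟨x,e₁⟩` for `x` uniform on the sphere of radius `√d` in `ℝ^d`,
which has density proportional to `(1 - x²/d²)^((d-3)/2)` on `[-d, d]`. -/
def IsGegenbauerFamily (d : ℕ) (Q : ℕ → Polynomial ℝ) : Prop :=
  (∀ k, (Q k).degree = k) ∧
  (∀ k, (Q k).eval (d : ℝ) = 1) ∧
  (∀ j k, j ≠ k →
    ∫ x in Set.Icc (-(d : ℝ)) (d : ℝ),
      (Q j).eval x * (Q k).eval x * (1 - x ^ 2 / (d : ℝ) ^ 2) ^ (((d : ℝ) - 3) / 2) = 0)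

open Topology Matrix intervalIntegral

noncomputable section GegAux

/-- weight function -/
def gw (d : ℕ) (x : ℝ) : ℝ := (1 - x ^ 2 / (d:ℝ) ^ 2) ^ (((d:ℝ) - 3) / 2)

lemma gw_continuous {d : ℕ} (hd : 3 ≤ d) : Continuous (gw d) := by
  apply Continuous.rpow_const (by continuity)
  intro x; right
  have : (3:ℝ) ≤ (d:ℝ) := by exact_mod_cast hd
  linarith

lemma gw_nonneg {d : ℕ} {x : ℝ} (hx : x ∈ Set.uIcc (-(d:ℝ)) (d:ℝ)) : 0 ≤ gw d x := by
  apply Real.rpow_nonneg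
  have hd0 : (0:ℝ) ≤ d := Nat.cast_nonneg d
  rw [Set.uIcc_of_le (by linarith)] at hx
  obtain ⟨h1, h2⟩ := hx
  have hx2 : x ^ 2 ≤ (d:ℝ)^2 := sq_le_sq' h1 h2
  rcases eq_or_lt_of_le hd0 with h | h
  · rw [← h] at h1 h2
    have hx0 : x = 0 := le_antisymm h2 (by simpa using h1)
    rw [← h]; simp [hx0]
  · have := div_le_one_of_le₀ hx2 (by positivity)
    linarith

/-- moments (unnormalized) -/
def gI (d n : ℕ) : ℝ := ∫ x in (-(d:ℝ))..(d:ℝ), x ^ n * gw d x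

lemma icc_to_interval (d : ℕ) (f : ℝ → ℝ) :
    ∫ x in Set.Icc (-(d:ℝ)) (d:ℝ), f x = ∫ x in (-(d:ℝ))..(d:ℝ), f x := by
  have hd0 : (0:ℝ) ≤ d := Nat.cast_nonneg d
  rw [intervalIntegral.integral_of_le (by linarith), MeasureTheory.integral_Icc_eq_integral_Ioc]

lemma gI_odd (d n : ℕ) (hn : Odd n) : gI d n = 0 := by
  have h1 : (∫ x in (-(d:ℝ))..(d:ℝ), ((-x) ^ n * gw d (-x)))
      = ∫ x in (-(d:ℝ))..(d:ℝ), x ^ n * gw d x := by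
    simpa using intervalIntegral.integral_comp_neg (a := -(d:ℝ)) (b := (d:ℝ))
      (fun x => x ^ n * gw d x)
  have h2 : ∀ x : ℝ, (-x) ^ n * gw d (-x) = -(x ^ n * gw d x) := by
    intro x
    rw [hn.neg_pow]
    have : gw d (-x) = gw d x := by simp [gw, neg_pow]
    rw [this]; ring
  simp only [h2, intervalIntegral.integral_neg] at h1
  have : gI d n = - gI d n := by rw [gI] at *; linarith
  linarith

lemma gI0_pos {d : ℕ} (hd : 3 ≤ d) : 0 < gI d 0 := by
  have hd0 : (0:ℝ) < d := by exact_mod_cast (by omega : 0 < d)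
  apply intervalIntegral.intervalIntegral_pos_of_pos_on
  · exact (continuous_pow 0 |>.mul (gw_continuous hd)).intervalIntegrable _ _
  · intro x hx
    have h1 : 0 < 1 - x ^ 2 / (d:ℝ) ^ 2 := by
      have : x ^ 2 < (d:ℝ) ^ 2 := sq_lt_sq' hx.1 hx.2
      have := (div_lt_one (by positivity)).2 this
      linarith
    simp only [pow_zero, one_mul, gw]
    exact Real.rpow_pos_of_pos h1 _
  · linarith

lemma gI_rec {d : ℕ} (hd : 4 ≤ d) (n : ℕ) :
    ((d:ℝ) + n) * gI d (n + 2) = ((n:ℝ) + 1) * (d:ℝ) ^ 2 * gI d n := by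
  have hd3 : 3 ≤ d := by omega
  have hD : (4:ℝ) ≤ (d:ℝ) := by exact_mod_cast hd
  set D : ℝ := (d:ℝ) with hDdef
  have hD0 : 0 < D := by linarith
  set p : ℝ := (D - 1) / 2 with hp
  have hp1 : 1 ≤ p := by rw [hp]; linarith
  have hpm : p - 1 = (D - 3) / 2 := by rw [hp]; ring
  set g : ℝ → ℝ := fun x => (1 - x ^ 2 / D ^ 2) ^ p with hg
  have hgd : ∀ x : ℝ, HasDerivAt g (p * (1 - x^2/D^2) ^ (p-1) * (-(2*x)/D^2)) x := by
    intro x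
    have hb : HasDerivAt (fun x : ℝ => 1 - x ^ 2 / D ^ 2) (-(2*x)/D^2) x := by
      have := ((hasDerivAt_pow 2 x).div_const (D^2)).const_sub 1
      refine this.congr_deriv ?_
      push_cast; ring
    have := hb.rpow_const (Or.inr hp1)
    convert this using 1
    ring
  have hgw_eq : ∀ x : ℝ, (1 - x^2/D^2) ^ (p-1) = gw d x := by
    intro x; rw [gw, hpm]
  have hbase_nonneg : ∀ x ∈ Set.uIcc (-D) D, 0 ≤ 1 - x^2/D^2 := by
    intro x hx
    rw [Set.uIcc_of_le (by linarith)] at hx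
    have hx2 : x ^ 2 ≤ D ^ 2 := sq_le_sq' hx.1 hx.2
    have := div_le_one_of_le₀ hx2 (by positivity)
    linarith
  have hgsplit : ∀ x ∈ Set.uIcc (-D) D, g x = (1 - x^2/D^2) * gw d x := by
    intro x hx
    have hb := hbase_nonneg x hx
    rcases eq_or_lt_of_le hb with h | h
    · rw [hg]; simp only
      rw [← h, Real.zero_rpow (by rw [hp]; intro hc; linarith [hc]), gw]
      have : (1 : ℝ) - x ^ 2 / (d:ℝ) ^ 2 = 0 := by rw [← hDdef, ← h]
      rw [this, Real.zero_rpow (by intro hc; rw [← hDdef] at hc; nlinarith [hc]), mul_zero]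
    · rw [hg, gw]; simp only
      have hpe : p = 1 + (D - 3)/2 := by rw [hp]; ring
      rw [hpe, Real.rpow_add h, Real.rpow_one, ← hDdef]
  have hcont_gw : Continuous (gw d) := gw_continuous hd3
  have hcont_base : Continuous (fun x : ℝ => (1 - x^2/D^2) ^ (p-1)) := by
    simp only [hgw_eq]; exact hcont_gw
  have hibp := intervalIntegral.integral_mul_deriv_eq_deriv_mul
    (u := fun x => x ^ (n+1)) (u' := fun x => ((n:ℝ)+1) * x ^ n) (v := g)
    (v' := fun x => p * (1 - x^2/D^2) ^ (p-1) * (-(2*x)/D^2))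
    (a := -D) (b := D)
    (fun x _ => by simpa using hasDerivAt_pow (n+1) x)
    (fun x _ => hgd x)
    ((continuous_const.mul (continuous_pow n)).intervalIntegrable _ _)
    (((continuous_const.mul hcont_base).mul (by continuity)).intervalIntegrable _ _)
  have hgD : g D = 0 := by
    rw [hg]; simp only
    rw [show (1 : ℝ) - D ^ 2 / D ^ 2 = 0 by field_simp; ring, Real.zero_rpow (by rw [hp]; intro hc; linarith [hc])]
  have hgDm : g (-D) = 0 := by
    rw [hg]; simp only
    rw [show (1 : ℝ) - (-D) ^ 2 / D ^ 2 = 0 by field_simp; ring, Real.zero_rpow (by rw [hp]; intro hc; linarith [hc])]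
  have hL : (∫ x in (-D)..D, x ^ (n+1) * (p * (1 - x^2/D^2) ^ (p-1) * (-(2*x)/D^2)))
      = (-(2*p)/D^2) * gI d (n+2) := by
    rw [gI, ← intervalIntegral.integral_const_mul, ← hDdef]
    apply intervalIntegral.integral_congr
    intro x _
    simp only [← hgw_eq]; ring
  have hR : (∫ x in (-D)..D, ((n:ℝ)+1) * x ^ n * g x)
      = ((n:ℝ)+1) * gI d n - (((n:ℝ)+1)/D^2) * gI d (n+2) := by
    have hcgr : ∀ x ∈ Set.uIcc (-D) D, ((n:ℝ)+1) * x ^ n * g x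
        = ((n:ℝ)+1) * (x ^ n * gw d x) - (((n:ℝ)+1)/D^2) * (x ^ (n+2) * gw d x) := by
      intro x hx; rw [hgsplit x hx]; ring
    rw [intervalIntegral.integral_congr hcgr, intervalIntegral.integral_sub
      ((show Continuous fun x => ((n:ℝ)+1) * (x ^ n * gw d x) from
        continuous_const.mul ((continuous_pow n).mul hcont_gw)).intervalIntegrable _ _)
      ((show Continuous fun x => (((n:ℝ)+1)/D^2) * (x ^ (n+2) * gw d x) from
        continuous_const.mul ((continuous_pow (n+2)).mul hcont_gw)).intervalIntegrable _ _),
      intervalIntegral.integral_const_mul, intervalIntegral.integral_const_mul]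
    rw [gI, gI, ← hDdef]
  rw [hL, hR, hgD, hgDm] at hibp
  rw [hp] at hibp
  have hD2 : D ^ 2 ≠ 0 := by positivity
  field_simp at hibp
  linear_combination (-1 : ℝ) * hibp

/-- Gaussian moments -/
def gam : ℕ → ℝ
  | 0 => 1
  | 1 => 0
  | (n+2) => ((n:ℝ) + 1) * gam n

/-- normalized rescaled moments -/
def gnu (d n : ℕ) : ℝ := (gI d n / gI d 0) * (d:ℝ) ^ (-(n:ℝ)/2)

lemma tendsto_div_add (c : ℝ) (hc : 0 ≤ c) :
    Tendsto (fun d : ℕ => (d:ℝ)/((d:ℝ)+c)) atTop (𝓝 1) := by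
  have h0 : Tendsto (fun d : ℕ => (d:ℝ) + c) atTop atTop :=
    tendsto_atTop_add_const_right _ c tendsto_natCast_atTop_atTop
  have h1 : Tendsto (fun d : ℕ => c / ((d:ℝ) + c)) atTop (𝓝 0) :=
    Tendsto.div_atTop tendsto_const_nhds h0
  have h2 : Tendsto (fun d : ℕ => 1 - c / ((d:ℝ) + c)) atTop (𝓝 1) := by
    simpa using tendsto_const_nhds.sub h1
  apply h2.congr'
  filter_upwards [eventually_ge_atTop 1] with d hd
  have hd1 : (1:ℝ) ≤ (d:ℝ) := by exact_mod_cast hd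
  field_simp
  ring

lemma gnu_tendsto : ∀ n, Tendsto (fun d : ℕ => gnu d n) atTop (𝓝 (gam n))
  | 0 => by
    have heq : ∀ᶠ d : ℕ in atTop, (1:ℝ) = gnu d 0 := by
      filter_upwards [eventually_ge_atTop 3] with d hd
      have h0 := gI0_pos hd
      simp [gnu, div_self (ne_of_gt h0)]
    simpa [gam] using tendsto_const_nhds.congr' heq
  | 1 => by
    have heq : ∀ d : ℕ, gnu d 1 = 0 := by
      intro d; simp [gnu, gI_odd d 1 odd_one]
    simp only [heq, gam]
    exact tendsto_const_nhds
  | (n+2) => by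
    have ih := gnu_tendsto n
    have heq : ∀ᶠ d : ℕ in atTop,
        ((n:ℝ)+1) * ((d:ℝ)/((d:ℝ)+n)) * gnu d n = gnu d (n+2) := by
      filter_upwards [eventually_ge_atTop 4] with d hd
      have hrec := gI_rec hd n
      have hD0 : (0:ℝ) < (d:ℝ) := by exact_mod_cast (by omega : 0 < d)
      have hDn : (0:ℝ) < (d:ℝ) + n := by positivity
      have hI2 : gI d (n+2) = ((n:ℝ)+1) * (d:ℝ)^2 * gI d n / ((d:ℝ)+n) := by
        field_simp
        linarith [hrec]
      rw [gnu, gnu, hI2]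
      rw [show (-(((n:ℕ)+2 : ℕ):ℝ)/2) = (-(n:ℝ)/2) + (-1) by push_cast; ring,
        Real.rpow_add hD0, Real.rpow_neg_one]
      have hI0 : gI d 0 ≠ 0 := ne_of_gt (gI0_pos (by omega))
      field_simp
    have h2 : Tendsto (fun d : ℕ => ((n:ℝ)+1) * ((d:ℝ)/((d:ℝ)+n)) * gnu d n)
        atTop (𝓝 (((n:ℝ)+1) * 1 * gam n)) :=
      (tendsto_const_nhds.mul (tendsto_div_add n (Nat.cast_nonneg n))).mul ih
    have := h2.congr' heq
    simpa [gam] using this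

/-! ### Hermite polynomials and the Gaussian-moment functional -/

def He : ℕ → Polynomial ℝ
  | 0 => 1
  | 1 => X
  | (n+2) => X * He (n+1) - C ((n:ℝ)+1) * He n

lemma gam_succ (n : ℕ) : gam (n+1) = n * gam (n-1) := by
  cases n with
  | zero => simp [gam]
  | succ m => simp [gam]

lemma He_coeff_gt : ∀ n, ∀ j, n < j → (He n).coeff j = 0
  | 0 => by intro j hj; simp [He, Polynomial.coeff_one]; omega
  | 1 => by
    intro j hj
    rw [He, Polynomial.coeff_X]
    simp only [if_neg (by omega : ¬ 1 = j)]
  | (n+2) => by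
    intro j hj
    rw [He, Polynomial.coeff_sub, Polynomial.coeff_C_mul]
    obtain ⟨j', rfl⟩ : ∃ j', j = j' + 1 := ⟨j - 1, by omega⟩
    rw [Polynomial.coeff_X_mul, He_coeff_gt (n+1) j' (by omega),
      He_coeff_gt n (j'+1) (by omega)]
    ring

lemma He_coeff_self : ∀ n, (He n).coeff n = 1
  | 0 => by simp [He]
  | 1 => by simp [He]
  | (n+2) => by
    rw [He, Polynomial.coeff_sub, Polynomial.coeff_C_mul, Polynomial.coeff_X_mul,
      He_coeff_self (n+1), He_coeff_gt n (n+2) (by omega)]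
    ring

lemma He_natDegree_le (n : ℕ) : (He n).natDegree ≤ n :=
  Polynomial.natDegree_le_iff_coeff_eq_zero.2 fun _ h => He_coeff_gt n _ h

lemma He_derivative : ∀ n, Polynomial.derivative (He (n+1)) = C ((n:ℝ)+1) * He n
  | 0 => by simp [He]
  | 1 => by
    show Polynomial.derivative (He 2) = _
    rw [show (2:ℕ) = 0 + 2 by rfl, He]
    simp [He]
    ring
  | (n+2) => by
    show Polynomial.derivative (He (n+3)) = _
    rw [show n + 3 = (n+1) + 2 by rfl, He, Polynomial.derivative_sub,
      Polynomial.derivative_mul, Polynomial.derivative_mul, Polynomial.derivative_X,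
      Polynomial.derivative_C, He_derivative (n+1), He_derivative n]
    rw [show n + 2 = n + 2 by rfl, He]
    simp only [Polynomial.C_add, Polynomial.C_1, Polynomial.C_eq_natCast]
    push_cast
    ring

/-- the Gaussian moment functional -/
def Lg (p : Polynomial ℝ) : ℝ := p.sum fun j c => c * gam j

lemma Lg_zero : Lg 0 = 0 := by rw [Lg]; exact Polynomial.sum_zero_index _

lemma Lg_monomial (n : ℕ) (a : ℝ) : Lg (Polynomial.monomial n a) = a * gam n := by
  rw [Lg]; exact Polynomial.sum_monomial_index a _ (zero_mul _)

lemma Lg_add (p q : Polynomial ℝ) : Lg (p + q) = Lg p + Lg q :=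
  Polynomial.sum_add_index p q _ (fun _ => zero_mul _) (fun _ a b => add_mul a b _)

lemma Lg_smul (c : ℝ) (p : Polynomial ℝ) : Lg (C c * p) = c * Lg p := by
  rw [Lg, Lg, Polynomial.sum_def, Polynomial.sum_def, Finset.mul_sum]
  rw [show (C c * p).support = if c = 0 then ∅ else p.support from ?_]
  · rcases eq_or_ne c 0 with rfl | hc
    · simp
    · rw [if_neg hc]
      apply Finset.sum_congr rfl
      intro j _
      rw [Polynomial.coeff_C_mul]; ring
  · rcases eq_or_ne c 0 with rfl | hc
    · simp
    · rw [if_neg hc]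
      ext j
      simp [Polynomial.mem_support_iff, Polynomial.coeff_C_mul, hc]

lemma Lg_sub (p q : Polynomial ℝ) : Lg (p - q) = Lg p - Lg q := by
  have h1 : Lg (-q) = - Lg q := by
    have := Lg_smul (-1) q
    simpa using this
  rw [sub_eq_add_neg, Lg_add, h1]; ring

lemma Lg_X_mul (p : Polynomial ℝ) : Lg (X * p) = Lg (Polynomial.derivative p) := by
  induction p using Polynomial.induction_on' with
  | add p q hp hq => rw [mul_add, Lg_add, hp, hq, Polynomial.derivative_add, Lg_add]
  | monomial n a =>
    rw [show (X : Polynomial ℝ) * Polynomial.monomial n a = Polynomial.monomial (n+1) a by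
        rw [Polynomial.X_mul_monomial], Lg_monomial, Polynomial.derivative_monomial,
      Lg_monomial, gam_succ]
    push_cast
    cases n with
    | zero => simp
    | succ m => push_cast; ring

lemma Lg_finset_sum {ι : Type*} (s : Finset ι) (f : ι → Polynomial ℝ) :
    Lg (∑ i ∈ s, f i) = ∑ i ∈ s, Lg (f i) := by
  classical
  induction s using Finset.induction_on with
  | empty => simp [Lg_zero]
  | insert a s' hx ih =>
                    rw [Finset.sum_insert hx, Lg_add, ih, Finset.sum_insert hx]

lemma Lg_one : Lg 1 = 1 := by
  have := Lg_monomial 0 1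
  simpa [gam] using this

lemma Lg_mul_expand (p q : Polynomial ℝ) (N : ℕ) (hp : p.natDegree < N) (hq : q.natDegree < N) :
    Lg (p * q) = ∑ a ∈ Finset.range N, ∑ b ∈ Finset.range N,
      p.coeff a * q.coeff b * gam (a + b) := by
  conv_lhs => rw [p.as_sum_range' N hp, q.as_sum_range' N hq]
  rw [Finset.sum_mul_sum, Lg_finset_sum]
  apply Finset.sum_congr rfl
  intro a _
  rw [Lg_finset_sum]
  apply Finset.sum_congr rfl
  intro b _
  rw [Polynomial.monomial_mul_monomial, Lg_monomial]

lemma Lg_key (q : Polynomial ℝ) (n : ℕ) :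
    Lg (q * He (n+1)) = Lg (Polynomial.derivative q * He n) := by
  cases n with
  | zero =>
    rw [show He 1 = X from rfl, show He 0 = 1 from rfl, mul_one, mul_comm, Lg_X_mul]
  | succ m =>
    rw [show He (m+2) = X * He (m+1) - C ((m:ℝ)+1) * He m from rfl]
    rw [mul_sub, Lg_sub, show q * (X * He (m+1)) = X * (q * He (m+1)) by ring, Lg_X_mul,
      Polynomial.derivative_mul, Lg_add, He_derivative m,
      show q * (C ((m:ℝ)+1) * He m) = C ((m:ℝ)+1) * (q * He m) by ring, Lg_smul]
    ring

lemma Lg_He_orth : ∀ n m, Lg (He m * He n) = if m = n then (Nat.factorial n : ℝ) else 0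
  | 0 => by
    intro m
    cases m with
    | zero => simp [He, Lg_one]
    | succ m' =>
      rw [show He 0 = 1 from rfl, mul_one, show He (m'+1) = 1 * He (m'+1) by ring, Lg_key]
      simp [Lg_zero]
  | (n+1) => by
    intro m
    rw [Lg_key]
    cases m with
    | zero =>
      rw [show He 0 = 1 from rfl]
      simp [Lg_zero]
    | succ m' =>
      rw [He_derivative m', mul_assoc, Lg_smul, Lg_He_orth n m']
      rcases eq_or_ne m' n with rfl | hne
      · rw [if_pos rfl, if_pos rfl]
        rw [Nat.factorial_succ]
        push_cast; ring
      · rw [if_neg hne, if_neg (by omega), mul_zero]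

lemma det_hankel_gam (k : ℕ) :
    (Matrix.of fun i j : Fin k => gam ((i:ℕ) + (j:ℕ))).det ≠ 0 := by
  classical
  set H : Matrix (Fin k) (Fin k) ℝ := Matrix.of fun i j => gam ((i:ℕ)+(j:ℕ)) with hH
  set B : Matrix (Fin k) (Fin k) ℝ := Matrix.of fun i j => (He (i:ℕ)).coeff (j:ℕ) with hB
  have key : ∀ m n : Fin k, (B * H * Bᵀ) m n
      = (if (m:ℕ) = (n:ℕ) then (Nat.factorial (n:ℕ) : ℝ) else 0) := by
    intro m n
    rw [← Lg_He_orth, Lg_mul_expand _ _ k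
      (lt_of_le_of_lt (He_natDegree_le _) m.isLt)
      (lt_of_le_of_lt (He_natDegree_le _) n.isLt)]
    have hRHS : (∑ a ∈ Finset.range k, ∑ b ∈ Finset.range k,
        (He (m:ℕ)).coeff a * (He (n:ℕ)).coeff b * gam (a + b))
        = ∑ b : Fin k, ∑ a : Fin k,
          (He (m:ℕ)).coeff (a:ℕ) * (He (n:ℕ)).coeff (b:ℕ) * gam ((a:ℕ) + (b:ℕ)) := by
      rw [Finset.sum_comm, ← Fin.sum_univ_eq_sum_range]
      apply Finset.sum_congr rfl
      intro b _
      rw [← Fin.sum_univ_eq_sum_range]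
    rw [hRHS]
    simp only [Matrix.mul_apply, Matrix.transpose_apply, hB, hH, Matrix.of_apply]
    apply Finset.sum_congr rfl
    intro b _
    rw [Finset.sum_mul]
    apply Finset.sum_congr rfl
    intro a _
    ring
  have hBH : B * H * Bᵀ = Matrix.diagonal (fun i : Fin k => (Nat.factorial (i:ℕ) : ℝ)) := by
    ext m n
    rw [key, Matrix.diagonal_apply]
    by_cases h : m = n
    · rw [if_pos h, if_pos (by rw [h]), h]
    · rw [if_neg h, if_neg (fun hc => h (Fin.ext hc))]
  have hdetB : B.det = 1 := by
    have ht : B.BlockTriangular OrderDual.toDual := by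
      intro i j hij
      exact He_coeff_gt _ _ hij
    rw [Matrix.det_of_lowerTriangular B ht]
    simp only [hB, Matrix.of_apply]
    simp [He_coeff_self]
  have hd : B.det * H.det * Bᵀ.det = ∏ i : Fin k, (Nat.factorial (i:ℕ) : ℝ) := by
    rw [← Matrix.det_mul, ← Matrix.det_mul, hBH, Matrix.det_diagonal]
  rw [Matrix.det_transpose, hdetB, one_mul, mul_one] at hd
  rw [hd]
  have : (0:ℝ) < ∏ i : Fin k, (Nat.factorial (i:ℕ) : ℝ) :=
    Finset.prod_pos (fun i _ => by exact_mod_cast Nat.factorial_pos _)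
  exact ne_of_gt this

def Ainf (k : ℕ) : Matrix (Fin (k+1)) (Fin (k+1)) ℝ :=
  Matrix.of fun m s => if (m:ℕ) < k then gam ((m:ℕ) + (s:ℕ)) else (if (s:ℕ) = k then 1 else 0)

lemma Ainf_det_ne (k : ℕ) : (Ainf k).det ≠ 0 := by
  classical
  have hexp := Matrix.det_succ_row (Ainf k) (Fin.last k)
  have hrow : ∀ j : Fin (k+1), Ainf k (Fin.last k) j = if (j:ℕ) = k then 1 else 0 := by
    intro j
    simp [Ainf, Fin.val_last]
  have hsum : (Ainf k).det = (-1 : ℝ) ^ ((Fin.last k : ℕ) + (Fin.last k : ℕ)) *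
      Ainf k (Fin.last k) (Fin.last k) *
      ((Ainf k).submatrix (Fin.last k).succAbove (Fin.last k).succAbove).det := by
    rw [hexp]
    rw [Finset.sum_eq_single (Fin.last k)]
    · intro j _ hj
      rw [hrow j, if_neg (fun hc => hj (Fin.ext (by simp [hc, Fin.val_last])))]
      ring
    · intro h; exact absurd (Finset.mem_univ _) h
  have hsub : (Ainf k).submatrix (Fin.last k).succAbove (Fin.last k).succAbove
      = Matrix.of fun i j : Fin k => gam ((i:ℕ) + (j:ℕ)) := by
    ext i j
    simp only [Matrix.submatrix_apply, Fin.succAbove_last, Ainf, Matrix.of_apply,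
      Fin.coe_castSucc]
    rw [if_pos i.isLt]
  rw [hsum, hsub, hrow, if_pos (by simp [Fin.val_last]), Fin.val_last]
  have hsign : (-1 : ℝ) ^ (k + k) = 1 := Even.neg_one_pow ⟨k, rfl⟩
  rw [hsign, one_mul, one_mul]
  exact det_hankel_gam k


lemma geg_integrable {d : ℕ} (hd : 3 ≤ d) (p q : Polynomial ℝ) :
    MeasureTheory.IntegrableOn (fun x => p.eval x * q.eval x * gw d x)
      (Set.Icc (-(d:ℝ)) (d:ℝ)) :=
  (((p.continuous).mul (q.continuous)).mul (gw_continuous hd)).integrableOn_Icc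

lemma geg_orth_poly {d k : ℕ} {Q : ℕ → Polynomial ℝ} (hd : 3 ≤ d)
    (hfam : IsGegenbauerFamily d Q) :
    ∀ m, m < k → ∀ R : Polynomial ℝ, R.natDegree ≤ m →
      ∫ x in Set.Icc (-(d:ℝ)) (d:ℝ), R.eval x * (Q k).eval x * gw d x = 0 := by
  obtain ⟨hdeg, hnorm, horth⟩ := hfam
  intro m
  induction m using Nat.strong_induction_on with
  | _ m IH =>
    intro hmk R hR
    have hQmdeg : (Q m).natDegree = m := Polynomial.natDegree_eq_of_degree_eq_some (hdeg m)
    have hQm0 : Q m ≠ 0 := by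
      intro h
      have := hdeg m
      rw [h, Polynomial.degree_zero] at this
      exact absurd this.symm (by simp)
    have hc : (Q m).coeff m ≠ 0 := by
      have := Polynomial.leadingCoeff_ne_zero.mpr hQm0
      rwa [Polynomial.leadingCoeff, hQmdeg] at this
    set a : ℝ := R.coeff m / (Q m).coeff m with ha
    set R' : Polynomial ℝ := R - C a * Q m with hR'
    have hR'c : ∀ j, m ≤ j → R'.coeff j = 0 := by
      intro j hj
      rcases eq_or_lt_of_le hj with rfl | hlt
      · rw [hR']
        simp only [Polynomial.coeff_sub, Polynomial.coeff_C_mul]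
        rw [ha]
        field_simp
        ring
      · rw [hR']
        simp only [Polynomial.coeff_sub, Polynomial.coeff_C_mul]
        rw [Polynomial.coeff_eq_zero_of_natDegree_lt (lt_of_le_of_lt hR hlt),
          Polynomial.coeff_eq_zero_of_natDegree_lt (by omega : (Q m).natDegree < j)]
        ring
    have hsplit : R = C a * Q m + R' := by rw [hR']; ring
    rw [hsplit]
    have hfe : (fun x => (C a * Q m + R').eval x * (Q k).eval x * gw d x)
        = fun x => a * ((Q m).eval x * (Q k).eval x * gw d x)
          + R'.eval x * (Q k).eval x * gw d x := by
      funext x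
      simp only [Polynomial.eval_add, Polynomial.eval_mul, Polynomial.eval_C]
      ring
    rw [hfe, MeasureTheory.integral_add ((geg_integrable hd (Q m) (Q k)).const_mul a)
      (geg_integrable hd R' (Q k)), MeasureTheory.integral_const_mul]
    have h1 : ∫ x in Set.Icc (-(d:ℝ)) (d:ℝ), (Q m).eval x * (Q k).eval x * gw d x = 0 :=
      horth m k (Nat.ne_of_lt hmk)
    have h2 : ∫ x in Set.Icc (-(d:ℝ)) (d:ℝ), R'.eval x * (Q k).eval x * gw d x = 0 := by
      by_cases hz : R' = 0
      · rw [hz]; simp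
      · have hm0 : m ≠ 0 := by
          intro h
          apply hz
          apply Polynomial.ext
          intro j
          simpa using hR'c j (by omega)
        have hdR' : R'.natDegree ≤ m - 1 :=
          Polynomial.natDegree_le_iff_coeff_eq_zero.2 fun j hj => hR'c j (by omega)
        exact IH (m-1) (by omega) (by omega) R' hdR'
    rw [h1, h2]
    ring

lemma geg_natDegree {d k : ℕ} {Q : ℕ → Polynomial ℝ} (hfam : IsGegenbauerFamily d Q) :
    (Q k).natDegree = k := Polynomial.natDegree_eq_of_degree_eq_some (hfam.1 k)

lemma geg_moment_eq {d k : ℕ} {Q : ℕ → Polynomial ℝ} (hd : 3 ≤ d)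
    (hfam : IsGegenbauerFamily d Q) (m : ℕ) (hm : m < k) :
    ∑ t ∈ Finset.range (k+1), (Q k).coeff t * gI d (m+t) = 0 := by
  have h0 := geg_orth_poly hd hfam m hm (X^m) (by simp)
  have hPdeg : (Q k).natDegree < k + 1 := by rw [geg_natDegree hfam]; omega
  have hfe : (fun x => (X^m : Polynomial ℝ).eval x * (Q k).eval x * gw d x)
      = fun x => ∑ t ∈ Finset.range (k+1), (Q k).coeff t * (x^(m+t) * gw d x) := by
    funext x
    rw [Polynomial.eval_pow, Polynomial.eval_X,
      Polynomial.eval_eq_sum_range' hPdeg x, Finset.mul_sum, Finset.sum_mul]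
    apply Finset.sum_congr rfl
    intro t _
    rw [pow_add]
    ring
  rw [hfe, MeasureTheory.integral_finset_sum _ (fun t _ =>
    (show Continuous fun x : ℝ => (Q k).coeff t * (x^(m+t) * gw d x) from
      (((continuous_const.mul ((continuous_pow (m+t)).mul (gw_continuous hd)))))).integrableOn_Icc)]
    at h0
  rw [← h0]
  apply Finset.sum_congr rfl
  intro t _
  rw [MeasureTheory.integral_const_mul, icc_to_interval, gI]

lemma geg_norm_eq {d k : ℕ} {Q : ℕ → Polynomial ℝ} (hfam : IsGegenbauerFamily d Q) :
    ∑ t ∈ Finset.range (k+1), (Q k).coeff t * (d:ℝ)^t = 1 := by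
  have h := hfam.2.1 k
  have hPdeg : (Q k).natDegree < k + 1 := by rw [geg_natDegree hfam]; omega
  rw [Polynomial.eval_eq_sum_range' hPdeg] at h
  exact h

def Amat (k d : ℕ) : Matrix (Fin (k+1)) (Fin (k+1)) ℝ :=
  Matrix.of fun m s => if (m:ℕ) < k then gnu d ((m:ℕ) + (s:ℕ))
    else (d:ℝ) ^ ((((s:ℕ):ℝ) - (k:ℝ))/2)

def evec (k : ℕ) : Fin (k+1) → ℝ := fun m => if (m:ℕ) = k then 1 else 0

lemma Amat_tendsto (k : ℕ) : Tendsto (fun d => Amat k d) atTop (𝓝 (Ainf k)) := by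
  apply tendsto_pi_nhds.2
  intro m
  rw [tendsto_pi_nhds]
  intro s
  by_cases hm : (m:ℕ) < k
  · simp only [Amat, Ainf, Matrix.of_apply, if_pos hm]
    exact gnu_tendsto _
  · simp only [Amat, Ainf, Matrix.of_apply, if_neg hm]
    by_cases hs : (s:ℕ) = k
    · rw [if_pos hs]
      have he : ∀ d:ℕ, (d:ℝ) ^ ((((s:ℕ):ℝ) - (k:ℝ))/2) = 1 := by
        intro d; rw [hs]; simp
      simp only [he]
      exact tendsto_const_nhds
    · rw [if_neg hs]
      have hsk : (s:ℕ) < k := by have := s.isLt; omega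
      have hneg : (0:ℝ) < ((k:ℝ) - ((s:ℕ):ℝ))/2 := by
        have : ((s:ℕ):ℝ) < (k:ℝ) := by exact_mod_cast hsk
        linarith
      have h1 : Tendsto (fun x:ℝ => x ^ (-(((k:ℝ) - ((s:ℕ):ℝ))/2))) atTop (𝓝 0) :=
        tendsto_rpow_neg_atTop hneg
      have h2 := h1.comp (tendsto_natCast_atTop_atTop (R := ℝ))
      simpa [Function.comp_def,
        show -(((k:ℝ) - ((s:ℕ):ℝ))/2) = (((s:ℕ):ℝ) - (k:ℝ))/2 by ring] using h2

lemma geg_mulVec {d k : ℕ} {Q : ℕ → Polynomial ℝ} (hd : 4 ≤ d)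
    (hfam : IsGegenbauerFamily d Q) :
    (Amat k d) *ᵥ (fun t : Fin (k+1) => (Q k).coeff t * (d:ℝ) ^ (((k:ℝ) + ((t:ℕ):ℝ))/2))
      = evec k := by
  have hD0 : (0:ℝ) < d := by exact_mod_cast (by omega : 0 < d)
  have hI0 : gI d 0 ≠ 0 := ne_of_gt (gI0_pos (by omega))
  funext m
  rw [Matrix.mulVec, dotProduct]
  by_cases hm : (m:ℕ) < k
  · have hmom := geg_moment_eq (by omega) hfam m hm
    simp only [Amat, Matrix.of_apply, if_pos hm, evec, if_neg (by omega : ¬ (m:ℕ) = k)]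
    have hterm : ∀ t : Fin (k+1),
        gnu d ((m:ℕ)+(t:ℕ)) * ((Q k).coeff t * (d:ℝ)^(((k:ℝ)+((t:ℕ):ℝ))/2))
        = ((Q k).coeff t * gI d ((m:ℕ)+(t:ℕ)))
          * ((d:ℝ) ^ (((k:ℝ)-((m:ℕ):ℝ))/2) / gI d 0) := by
      intro t
      have hrp : (d:ℝ) ^ (-(((((m:ℕ)+(t:ℕ)) : ℕ):ℝ))/2) * (d:ℝ)^(((k:ℝ)+((t:ℕ):ℝ))/2)
          = (d:ℝ)^(((k:ℝ)-((m:ℕ):ℝ))/2) := by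
        rw [← Real.rpow_add hD0]
        congr 1
        push_cast
        ring
      rw [show gnu d ((m:ℕ)+(t:ℕ)) * ((Q k).coeff t * (d:ℝ)^(((k:ℝ)+((t:ℕ):ℝ))/2))
          = ((Q k).coeff t * gI d ((m:ℕ)+(t:ℕ)))
            * (((d:ℝ) ^ (-(((((m:ℕ)+(t:ℕ)) : ℕ):ℝ))/2) * (d:ℝ)^(((k:ℝ)+((t:ℕ):ℝ))/2)) / gI d 0)
          from by rw [gnu]; ring, hrp]
    rw [Finset.sum_congr rfl (fun t _ => hterm t), ← Finset.sum_mul]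
    have hconv : (∑ t : Fin (k+1), (Q k).coeff (t:ℕ) * gI d ((m:ℕ)+(t:ℕ)))
        = ∑ t ∈ Finset.range (k+1), (Q k).coeff t * gI d ((m:ℕ)+t) :=
      Fin.sum_univ_eq_sum_range (fun t => (Q k).coeff t * gI d ((m:ℕ)+t)) (k+1)
    rw [hconv, hmom, zero_mul]
  · have hmk : (m:ℕ) = k := by have := m.isLt; omega
    simp only [Amat, Matrix.of_apply, if_neg hm, evec, if_pos hmk]
    have hterm : ∀ t : Fin (k+1),
        (d:ℝ) ^ ((((t:ℕ):ℝ) - (k:ℝ))/2) * ((Q k).coeff t * (d:ℝ)^(((k:ℝ)+((t:ℕ):ℝ))/2))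
        = (Q k).coeff t * (d:ℝ)^(t:ℕ) := by
      intro t
      have hrp : (d:ℝ) ^ ((((t:ℕ):ℝ) - (k:ℝ))/2) * (d:ℝ)^(((k:ℝ)+((t:ℕ):ℝ))/2)
          = (d:ℝ)^((t:ℕ):ℝ) := by
        rw [← Real.rpow_add hD0]
        congr 1
        ring
      rw [show (d:ℝ) ^ ((((t:ℕ):ℝ) - (k:ℝ))/2) * ((Q k).coeff t * (d:ℝ)^(((k:ℝ)+((t:ℕ):ℝ))/2))
          = (Q k).coeff t * ((d:ℝ) ^ ((((t:ℕ):ℝ) - (k:ℝ))/2) * (d:ℝ)^(((k:ℝ)+((t:ℕ):ℝ))/2))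
          from by ring, hrp, Real.rpow_natCast]
    rw [Finset.sum_congr rfl (fun t _ => hterm t)]
    have hconv : (∑ t : Fin (k+1), (Q k).coeff (t:ℕ) * (d:ℝ)^(t:ℕ))
        = ∑ t ∈ Finset.range (k+1), (Q k).coeff t * (d:ℝ)^t :=
      Fin.sum_univ_eq_sum_range (fun t => (Q k).coeff t * (d:ℝ)^t) (k+1)
    rw [hconv, geg_norm_eq hfam]

theorem gegenbauer_coeff_isBigO'
    (Q : (d : ℕ) → ℕ → Polynomial ℝ)
    (hQ : ∀ d, 3 ≤ d → IsGegenbauerFamily d (Q d))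
    (k s : ℕ) :
    (fun d : ℕ => (Q d k).coeff s) =O[atTop]
      (fun d : ℕ => (d : ℝ) ^ (-(k : ℝ) / 2 - (s : ℝ) / 2)) := by
  rcases le_or_gt s k with hsk | hks
  · set sf : Fin (k+1) := ⟨s, by omega⟩ with hsf
    set qv : ℕ → Fin (k+1) → ℝ :=
      fun d t => (Q d k).coeff t * (d:ℝ) ^ (((k:ℝ) + ((t:ℕ):ℝ))/2) with hqv
    have hAq : ∀ᶠ d : ℕ in atTop, (Amat k d) *ᵥ qv d = evec k := by
      filter_upwards [eventually_ge_atTop 4] with d hd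
      exact geg_mulVec hd (hQ d (by omega))
    have hAtend := Amat_tendsto k
    have hdet : Tendsto (fun d => (Amat k d).det) atTop (𝓝 (Ainf k).det) :=
      ((continuous_id.matrix_det).tendsto _).comp hAtend
    have hadj : Tendsto (fun d => (Amat k d).adjugate *ᵥ evec k) atTop
        (𝓝 ((Ainf k).adjugate *ᵥ evec k)) :=
      ((continuous_id.matrix_adjugate.matrix_mulVec continuous_const).tendsto _).comp hAtend
    have hdetne : ∀ᶠ d : ℕ in atTop, (Amat k d).det ≠ 0 :=
      hdet.eventually_ne (Ainf_det_ne k)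
    have hq_eq : qv =ᶠ[atTop]
        fun d => ((Amat k d).det)⁻¹ • ((Amat k d).adjugate *ᵥ evec k) := by
      filter_upwards [hAq, hdetne] with d h1 h2
      have hinv : (Amat k d)⁻¹ *ᵥ (Amat k d *ᵥ qv d) = qv d := by
        rw [Matrix.mulVec_mulVec, Matrix.nonsing_inv_mul _ (isUnit_iff_ne_zero.2 h2),
          Matrix.one_mulVec]
      rw [← hinv, h1, Matrix.inv_def, Ring.inverse_eq_inv', Matrix.smul_mulVec]
    have hqt : Tendsto qv atTop
        (𝓝 (((Ainf k).det)⁻¹ • ((Ainf k).adjugate *ᵥ evec k))) :=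
      ((hdet.inv₀ (Ainf_det_ne k)).smul hadj).congr' hq_eq.symm
    have hcoord := (tendsto_pi_nhds.1 hqt) sf
    have hO1 : (fun d => qv d sf) =O[atTop] (fun _ : ℕ => (1:ℝ)) := hcoord.isBigO_one ℝ
    have hOg := hO1.mul (Asymptotics.isBigO_refl
      (fun d : ℕ => (d:ℝ) ^ (-(k : ℝ) / 2 - (s : ℝ) / 2)) atTop)
    have hOg' : (fun d : ℕ => qv d sf * (d:ℝ) ^ (-(k : ℝ) / 2 - (s : ℝ) / 2)) =O[atTop]
        (fun d : ℕ => (d:ℝ) ^ (-(k : ℝ) / 2 - (s : ℝ) / 2)) := by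
      simpa using hOg
    have hfeq : (fun d : ℕ => (Q d k).coeff s) =ᶠ[atTop]
        fun d => qv d sf * (d:ℝ) ^ (-(k : ℝ) / 2 - (s : ℝ) / 2) := by
      filter_upwards [eventually_ge_atTop 1] with d hd
      have hD0 : (0:ℝ) < d := by exact_mod_cast (by omega : 0 < d)
      rw [hqv]
      simp only
      rw [mul_assoc, ← Real.rpow_add hD0]
      have hz : ((k:ℝ) + ((sf:ℕ):ℝ))/2 + (-(k : ℝ) / 2 - (s : ℝ) / 2) = 0 := by
        have : ((sf:ℕ):ℝ) = (s:ℝ) := by rw [hsf]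
        rw [this]; ring
      rw [hz, Real.rpow_zero, mul_one]
    exact hfeq.trans_isBigO hOg'
  · rw [Asymptotics.isBigO_iff]
    refine ⟨1, ?_⟩
    filter_upwards [eventually_ge_atTop 3] with d hd
    have h0 : (Q d k).coeff s = 0 :=
      Polynomial.coeff_eq_zero_of_natDegree_lt (by rw [geg_natDegree (hQ d hd)]; omega)
    rw [h0]
    simp

end GegAux

/-- For each fixed `k` and `s`, the coefficient `p_{k,s}^{(d)}` of `x^s` in the `k`-th
Gegenbauer polynomial `Q_k^{(d)}` satisfies `p_{k,s}^{(d)} = O(d^{-k/2 - s/2})` as `d → ∞`. -/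
theorem gegenbauer_coeff_isBigO
    (Q : (d : ℕ) → ℕ → Polynomial ℝ)
    (hQ : ∀ d, 3 ≤ d → IsGegenbauerFamily d (Q d))
    (k s : ℕ) :
    (fun d : ℕ => (Q d k).coeff s) =O[atTop]
      (fun d : ℕ => (d : ℝ) ^ (-(k : ℝ) / 2 - (s : ℝ) / 2)) :=
  gegenbauer_coeff_isBigO' Q hQ k s
end

section
/- Let D be an invertible symmetric Q×Q block matrix (blocks D^{qq'} of sizes m_q × m_{q'}) such that each diagonal block satisfies 0 < c_q·s_q ≤ λ_min(D^{qq}) ≤ λ_max(D^{qq}) ≤ C_q·s_q for scalars s_q > 0, and each off-diagonal block satisfies σ_max(D^{qq'}) ≤ δ·√(s_q·s_{q'}) for sufficiently small δ. Then the inverse B = D^{-1} satisfies ||B^{qq}||_op = O(1/s_q) and ||B^{qq'}||_op = O(δ/√(s_q s_{q'})) for q ≠ q', with constants depending only on Q, c_q, C_q. -/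
open Matrix Finset


/-- The `ℓ²→ℓ²` operator norm of a real matrix (largest singular value). -/
noncomputable def matOpNorm {m n : Type*} [Fintype m] [Fintype n] [DecidableEq n]
    (M : Matrix m n ℝ) : ℝ :=
  ‖LinearMap.toContinuousLinearMap (Matrix.toEuclideanLin M)‖

/-- The `(q,q')` block of a `Q×Q` block matrix. -/
def blk {Qn : ℕ} {m : Fin Qn → ℕ}
    (M : Matrix ((q : Fin Qn) × Fin (m q)) ((q : Fin Qn) × Fin (m q)) ℝ)
    (q q' : Fin Qn) : Matrix (Fin (m q)) (Fin (m q')) ℝ :=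
  fun i j => M ⟨q, i⟩ ⟨q', j⟩

noncomputable def euNorm {ι : Type*} [Fintype ι] (v : ι → ℝ) : ℝ :=
  ‖(WithLp.equiv 2 (ι → ℝ)).symm v‖

lemma euNorm_eq {ι : Type*} [Fintype ι] (v : ι → ℝ) :
    euNorm v = Real.sqrt (∑ i, v i ^ 2) := by
  rw [euNorm, EuclideanSpace.norm_eq]
  congr 1; apply Finset.sum_congr rfl; intro i _
  change ‖v i‖ ^ 2 = v i ^ 2
  rw [Real.norm_eq_abs, sq_abs]

lemma euNorm_nonneg {ι : Type*} [Fintype ι] (v : ι → ℝ) : 0 ≤ euNorm v := norm_nonneg _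

lemma euNorm_sq {ι : Type*} [Fintype ι] (v : ι → ℝ) : euNorm v ^ 2 = ∑ i, v i ^ 2 := by
  rw [euNorm_eq, Real.sq_sqrt]; positivity

lemma euNorm_eq_zero {ι : Type*} [Fintype ι] {v : ι → ℝ} (h : euNorm v = 0) : v = 0 := by
  have := euNorm_sq v
  rw [h] at this
  funext i
  have h2 : ∀ j ∈ Finset.univ, (0:ℝ) ≤ v j ^ 2 := fun j _ => sq_nonneg _
  have := (Finset.sum_eq_zero_iff_of_nonneg h2).mp (by linarith) i (Finset.mem_univ i)
  exact pow_eq_zero_iff (by norm_num) |>.mp this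

-- Cauchy-Schwarz for dotProduct
lemma dot_le_enorm {ι : Type*} [Fintype ι] (v w : ι → ℝ) :
    dotProduct v w ≤ euNorm v * euNorm w := by
  have h := Finset.sum_mul_sq_le_sq_mul_sq Finset.univ v w
  have h1 : dotProduct v w ≤ |∑ i, v i * w i| := le_abs_self _
  calc dotProduct v w ≤ |∑ i, v i * w i| := h1
    _ ≤ Real.sqrt ((∑ i, v i ^2) * (∑ i, w i ^2)) := by
        rw [← Real.sqrt_sq_eq_abs]; exact Real.sqrt_le_sqrt h
    _ = euNorm v * euNorm w := by rw [Real.sqrt_mul (by positivity), euNorm_eq, euNorm_eq]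

lemma mulVec_enorm_le {m n : Type*} [Fintype m] [Fintype n] [DecidableEq n]
    (M : Matrix m n ℝ) (v : n → ℝ) :
    euNorm (M.mulVec v) ≤ matOpNorm M * euNorm v := by
  have := (LinearMap.toContinuousLinearMap (Matrix.toEuclideanLin M)).le_opNorm
    ((WithLp.equiv 2 (n → ℝ)).symm v)
  simpa [matOpNorm, euNorm, Matrix.toEuclideanLin_apply] using this

lemma matOpNorm_nonneg {m n : Type*} [Fintype m] [Fintype n] [DecidableEq n]
    (M : Matrix m n ℝ) : 0 ≤ matOpNorm M := norm_nonneg _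

lemma matOpNorm_le {m n : Type*} [Fintype m] [Fintype n] [DecidableEq n]
    (M : Matrix m n ℝ) {a : ℝ} (ha : 0 ≤ a)
    (h : ∀ v, euNorm (M.mulVec v) ≤ a * euNorm v) : matOpNorm M ≤ a := by
  apply ContinuousLinearMap.opNorm_le_bound _ ha
  intro x
  have := h ((WithLp.equiv 2 (n → ℝ)) x)
  simpa [euNorm, Matrix.toEuclideanLin_apply] using this

lemma dot_mulVec_le {m n : Type*} [Fintype m] [Fintype n] [DecidableEq n]
    (M : Matrix m n ℝ) (v : m → ℝ) (w : n → ℝ) :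
    dotProduct v (M.mulVec w) ≤ matOpNorm M * euNorm v * euNorm w := by
  calc dotProduct v (M.mulVec w) ≤ euNorm v * euNorm (M.mulVec w) := dot_le_enorm _ _
    _ ≤ euNorm v * (matOpNorm M * euNorm w) := by
        apply mul_le_mul_of_nonneg_left (mulVec_enorm_le M w) (euNorm_nonneg v)
    _ = matOpNorm M * euNorm v * euNorm w := by ring

lemma matOpNorm_le_of_dot {m n : Type*} [Fintype m] [Fintype n] [DecidableEq n]
    (M : Matrix m n ℝ) {a : ℝ} (ha : 0 ≤ a)
    (h : ∀ (v : m → ℝ) (w : n → ℝ),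
      dotProduct v (M.mulVec w) ≤ a * euNorm v * euNorm w) : matOpNorm M ≤ a := by
  apply matOpNorm_le M ha
  intro w
  rcases eq_or_lt_of_le (euNorm_nonneg (M.mulVec w)) with h0 | h0
  · rw [← h0]; exact mul_nonneg ha (euNorm_nonneg w)
  · have h1 : euNorm (M.mulVec w) ^ 2 = dotProduct (M.mulVec w) (M.mulVec w) := by
      rw [euNorm_sq]; simp [dotProduct, sq]
    have h2 := h (M.mulVec w) w
    rw [← h1] at h2
    nlinarith [euNorm_nonneg w]

-- lower bound: α ‖u‖ ≤ ‖A u‖ when α‖u‖² ≤ uᵀAu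
lemma euNorm_mulVec_ge {n : Type*} [Fintype n] [DecidableEq n]
    (A : Matrix n n ℝ) {α : ℝ} (hα : 0 ≤ α)
    (h : ∀ u : n → ℝ, α * (∑ i, u i ^ 2) ≤ dotProduct u (A.mulVec u))
    (u : n → ℝ) : α * euNorm u ≤ euNorm (A.mulVec u) := by
  rcases eq_or_lt_of_le (euNorm_nonneg u) with h0 | h0
  · rw [← h0, mul_zero]; exact euNorm_nonneg _
  · have h1 := h u
    rw [← euNorm_sq] at h1
    have h2 := dot_le_enorm u (A.mulVec u)
    nlinarith

section Blocks
variable {Qn : ℕ} {m : Fin Qn → ℕ}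

def vblk (v : ((q : Fin Qn) × Fin (m q)) → ℝ) (q : Fin Qn) : Fin (m q) → ℝ :=
  fun i => v ⟨q, i⟩

def emb (q : Fin Qn) (x : Fin (m q) → ℝ) : ((r : Fin Qn) × Fin (m r)) → ℝ :=
  fun p => if h : p.1 = q then x (Fin.cast (by rw [h]) p.2) else 0

lemma sum_sigma_univ (f : ((q : Fin Qn) × Fin (m q)) → ℝ) :
    ∑ p, f p = ∑ q, ∑ i, f ⟨q, i⟩ := by
  rw [← Finset.univ_sigma_univ, Finset.sum_sigma]

lemma dot_split (v w : ((q : Fin Qn) × Fin (m q)) → ℝ) :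
    dotProduct v w = ∑ q, dotProduct (vblk v q) (vblk w q) := by
  simp only [dotProduct, vblk]
  exact sum_sigma_univ _

lemma vblk_mulVec (M : Matrix ((q : Fin Qn) × Fin (m q)) ((q : Fin Qn) × Fin (m q)) ℝ)
    (w : ((q : Fin Qn) × Fin (m q)) → ℝ) (q : Fin Qn) :
    vblk (M.mulVec w) q = ∑ q', (blk M q q').mulVec (vblk w q') := by
  funext i
  rw [Finset.sum_apply]
  simp only [vblk, Matrix.mulVec, dotProduct, blk]
  exact sum_sigma_univ _

lemma vblk_emb_self (q : Fin Qn) (x : Fin (m q) → ℝ) : vblk (emb q x) q = x := by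
  funext i
  simp only [vblk, emb, dif_pos]
  congr 1

lemma vblk_emb_ne {q r : Fin Qn} (h : r ≠ q) (x : Fin (m q) → ℝ) :
    vblk (emb q x) r = 0 := by
  funext i
  simp only [vblk, emb, dif_neg h, Pi.zero_apply]

lemma euNorm_emb (q : Fin Qn) (x : Fin (m q) → ℝ) : euNorm (emb q x) = euNorm x := by
  have h1 : euNorm (emb q x) ^ 2 = euNorm x ^ 2 := by
    rw [euNorm_sq, euNorm_sq, sum_sigma_univ]
    rw [Finset.sum_eq_single q]
    · refine Finset.sum_congr rfl fun i _ => ?_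
      rw [show emb q x ⟨q, i⟩ = x i from congrFun (vblk_emb_self q x) i]
    · intro r _ hr
      have := vblk_emb_ne hr x
      apply Finset.sum_eq_zero
      intro i _
      have : emb q x ⟨r, i⟩ = 0 := congrFun this i
      rw [this]; ring
    · intro h; exact absurd (Finset.mem_univ q) h
  have := euNorm_nonneg (emb q x); have := euNorm_nonneg x
  nlinarith

lemma dot_emb (q : Fin Qn) (x : Fin (m q) → ℝ) (u : ((r : Fin Qn) × Fin (m r)) → ℝ) :
    dotProduct (emb q x) u = dotProduct x (vblk u q) := by
  rw [dot_split]
  rw [Finset.sum_eq_single q]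
  · rw [vblk_emb_self]
  · intro r _ hr
    rw [vblk_emb_ne hr]
    simp [dotProduct]
  · intro h; exact absurd (Finset.mem_univ q) h

end Blocks

section Blocks2
variable {Qn : ℕ} {m : Fin Qn → ℕ}

lemma dot_emb_mulVec (B : Matrix ((q : Fin Qn) × Fin (m q)) ((q : Fin Qn) × Fin (m q)) ℝ)
    (q q' : Fin Qn) (x : Fin (m q) → ℝ) (y : Fin (m q') → ℝ) :
    dotProduct (emb q x) (B.mulVec (emb q' y))
      = dotProduct x ((blk B q q').mulVec y) := by
  rw [dot_emb, vblk_mulVec]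
  congr 1
  rw [Finset.sum_eq_single q']
  · rw [vblk_emb_self]
  · intro r _ hr; rw [vblk_emb_ne hr, Matrix.mulVec_zero]
  · intro h; exact absurd (Finset.mem_univ q') h

lemma dot_mulVec_split (D : Matrix ((q : Fin Qn) × Fin (m q)) ((q : Fin Qn) × Fin (m q)) ℝ)
    (v : ((q : Fin Qn) × Fin (m q)) → ℝ) :
    dotProduct v (D.mulVec v)
      = ∑ q, ∑ q', dotProduct (vblk v q) ((blk D q q').mulVec (vblk v q')) := by
  rw [dot_split]
  refine Finset.sum_congr rfl fun q _ => ?_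
  rw [vblk_mulVec]
  simp only [dotProduct, Finset.sum_apply, Finset.mul_sum]
  exact Finset.sum_comm

lemma blk_mul (M N : Matrix ((q : Fin Qn) × Fin (m q)) ((q : Fin Qn) × Fin (m q)) ℝ)
    (q q' : Fin Qn) : blk (M * N) q q' = ∑ r, blk M q r * blk N r q' := by
  funext i j
  rw [Matrix.sum_apply]
  simp only [blk, Matrix.mul_apply]
  exact sum_sigma_univ _

lemma blk_one_ne {q q' : Fin Qn} (h : q ≠ q') :
    blk (1 : Matrix ((q : Fin Qn) × Fin (m q)) ((q : Fin Qn) × Fin (m q)) ℝ) q q' = 0 := by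
  funext i j
  simp only [blk, Matrix.one_apply, Matrix.zero_apply]
  rw [if_neg]
  intro hh
  exact h (congrArg Sigma.fst hh)

end Blocks2

lemma euNorm_sum_le {ι κ : Type*} [Fintype ι] (t : Finset κ) (f : κ → ι → ℝ) :
    euNorm (∑ r ∈ t, f r) ≤ ∑ r ∈ t, euNorm (f r) := by
  have h : (WithLp.equiv 2 (ι → ℝ)).symm (∑ r ∈ t, f r)
      = ∑ r ∈ t, (WithLp.equiv 2 (ι → ℝ)).symm (f r) := by simp [WithLp.toLp_sum]
  rw [euNorm, h]
  exact norm_sum_le t _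

lemma euNorm_neg {ι : Type*} [Fintype ι] (v : ι → ℝ) : euNorm (-v) = euNorm v := by
  have h : (WithLp.equiv 2 (ι → ℝ)).symm (-v) = -((WithLp.equiv 2 (ι → ℝ)).symm v) := rfl
  rw [euNorm, h, norm_neg]; rfl

lemma dot_mulVec_symm {n : Type*} [Fintype n] (M : Matrix n n ℝ) (h : M.IsSymm)
    (v w : n → ℝ) :
    dotProduct v (M.mulVec w) = dotProduct w (M.mulVec v) := by
  simp only [dotProduct, Matrix.mulVec, dotProduct, Finset.mul_sum]
  rw [Finset.sum_comm]
  refine Finset.sum_congr rfl fun i _ => Finset.sum_congr rfl fun j _ => ?_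
  have hij : M j i = M i j := by
    conv_lhs => rw [← h]
    rfl
  rw [hij]; ring

lemma psd_cs {n : Type*} [Fintype n] [DecidableEq n] (B : Matrix n n ℝ)
    (hsym : B.IsSymm) (hpos : ∀ v, 0 ≤ dotProduct v (B.mulVec v)) (v w : n → ℝ) :
    dotProduct v (B.mulVec w) ^ 2
      ≤ dotProduct v (B.mulVec v) * dotProduct w (B.mulVec w) := by
  have key : ∀ t : ℝ, 0 ≤ (dotProduct w (B.mulVec w)) * (t * t)
      + (2 * dotProduct v (B.mulVec w)) * t + dotProduct v (B.mulVec v) := by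
    intro t
    have h0 := hpos (v + t • w)
    have e1 : dotProduct (v + t • w) (B.mulVec (v + t • w))
        = dotProduct v (B.mulVec v) + t * dotProduct v (B.mulVec w)
          + t * dotProduct w (B.mulVec v)
          + t * t * dotProduct w (B.mulVec w) := by
      rw [Matrix.mulVec_add, Matrix.mulVec_smul]
      simp only [dotProduct_add, add_dotProduct, smul_dotProduct,
        dotProduct_smul, smul_eq_mul]
      ring
    rw [e1, dot_mulVec_symm B hsym w v] at h0
    nlinarith [h0]
  have hd := discrim_le_zero key
  rw [discrim] at hd
  nlinarith [hd]

lemma coercive {Qn : ℕ} {m : Fin Qn → ℕ}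
    (D : Matrix ((q : Fin Qn) × Fin (m q)) ((q : Fin Qn) × Fin (m q)) ℝ)
    (s c : Fin Qn → ℝ) (δ : ℝ) (hδ : 0 ≤ δ) (hs : ∀ q, 0 < s q)
    (hlow : ∀ q, ∀ v : Fin (m q) → ℝ,
      c q * s q * (∑ i, v i ^ 2) ≤ dotProduct v (Matrix.mulVec (blk D q q) v))
    (hoff : ∀ q q', q ≠ q' → matOpNorm (blk D q q') ≤ δ * Real.sqrt (s q * s q'))
    (hsmall : ∀ q, δ * Qn ≤ c q / 2)
    (v : ((q : Fin Qn) × Fin (m q)) → ℝ) :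
    ∑ q, c q / 2 * (s q * euNorm (vblk v q) ^ 2) ≤ dotProduct v (D.mulVec v) := by
  classical
  set T : Fin Qn → Fin Qn → ℝ :=
    fun q q' => dotProduct (vblk v q) ((blk D q q').mulVec (vblk v q')) with hT
  set P : Fin Qn → ℝ := fun q => Real.sqrt (s q) * euNorm (vblk v q) with hPdef
  set N : Fin Qn → ℝ := fun q => euNorm (vblk v q) ^ 2 with hNdef
  have hP0 : ∀ q, 0 ≤ P q := fun q => mul_nonneg (Real.sqrt_nonneg _) (euNorm_nonneg _)
  have hP2 : ∀ q, P q ^ 2 = s q * N q := by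
    intro q
    rw [hPdef]
    simp only
    rw [mul_pow, Real.sq_sqrt (hs q).le]
  have hN0 : ∀ q, 0 ≤ N q := fun q => sq_nonneg _
  have hoffT : ∀ q q', q ≠ q' → -(δ * (P q * P q')) ≤ T q q' := by
    intro q q' hne
    have h1 := dot_mulVec_le (blk D q q') (-(vblk v q)) (vblk v q')
    rw [neg_dotProduct, euNorm_neg] at h1
    have h2 : matOpNorm (blk D q q') * euNorm (vblk v q) * euNorm (vblk v q')
        ≤ δ * Real.sqrt (s q * s q') * euNorm (vblk v q) * euNorm (vblk v q') := by
      exact mul_le_mul_of_nonneg_right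
        (mul_le_mul_of_nonneg_right (hoff q q' hne) (euNorm_nonneg _)) (euNorm_nonneg _)
    have h3 : δ * Real.sqrt (s q * s q') * euNorm (vblk v q) * euNorm (vblk v q')
        = δ * (P q * P q') := by
      rw [Real.sqrt_mul (hs q).le, hPdef]; ring
    rw [hT]; simp only
    linarith [h1, h2]
  have hdiagT : ∀ q, c q * s q * N q ≤ T q q := by
    intro q
    have := hlow q (vblk v q)
    rw [hNdef, hT]; simp only
    rw [euNorm_sq]
    exact this
  have hrow : ∀ q, c q * s q * N q - δ * (P q * ∑ q', P q') ≤ ∑ q', T q q' := by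
    intro q
    have hsub : ∑ q' ∈ Finset.univ.erase q, δ * (P q * P q')
        ≤ ∑ q', δ * (P q * P q') :=
      Finset.sum_le_sum_of_subset_of_nonneg (Finset.subset_univ _)
        (fun r _ _ => by have := hP0 q; have := hP0 r; positivity)
    have h2 : -(∑ q' ∈ Finset.univ.erase q, δ * (P q * P q'))
        ≤ ∑ q' ∈ Finset.univ.erase q, T q q' := by
      rw [← Finset.sum_neg_distrib]
      refine Finset.sum_le_sum fun r hr => ?_
      exact hoffT q r (Ne.symm (Finset.mem_erase.mp hr).1)
    have h3 : ∑ q', T q q' = T q q + ∑ q' ∈ Finset.univ.erase q, T q q' :=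
      (Finset.add_sum_erase Finset.univ _ (Finset.mem_univ q)).symm
    have h4 : δ * (P q * ∑ q', P q') = ∑ q', δ * (P q * P q') := by
      rw [Finset.mul_sum, Finset.mul_sum]
    rw [h3, h4]
    linarith [hdiagT q, h2, hsub]
  have hsum : ∑ q, (c q * s q * N q - δ * (P q * ∑ q', P q')) ≤ ∑ q, ∑ q', T q q' :=
    Finset.sum_le_sum fun q _ => hrow q
  have e1 : ∑ q, (c q * s q * N q - δ * (P q * ∑ q', P q'))
      = (∑ q, c q * s q * N q) - δ * (∑ q, P q) ^ 2 := by
    rw [Finset.sum_sub_distrib]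
    congr 1
    have : ∑ q, δ * (P q * ∑ q', P q') = δ * ((∑ q, P q) * (∑ q', P q')) := by
      rw [← Finset.mul_sum, ← Finset.sum_mul]
    rw [this, sq]
  have hCS : (∑ q, P q) ^ 2 ≤ Qn * ∑ q, P q ^ 2 := by
    have h := Finset.sum_mul_sq_le_sq_mul_sq Finset.univ (fun _ => (1 : ℝ)) P
    simpa [Finset.card_univ] using h
  have hPsum : ∑ q, P q ^ 2 = ∑ q, s q * N q := Finset.sum_congr rfl fun q _ => hP2 q
  have hfin : ∑ q, δ * Qn * (s q * N q) ≤ ∑ q, c q / 2 * (s q * N q) :=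
    Finset.sum_le_sum fun q _ =>
      mul_le_mul_of_nonneg_right (hsmall q) (mul_nonneg (hs q).le (hN0 q))
  have hfin2 : δ * Qn * ∑ q, s q * N q = ∑ q, δ * Qn * (s q * N q) := Finset.mul_sum _ _ _
  have hmul : δ * (∑ q, P q) ^ 2 ≤ δ * (Qn * ∑ q, P q ^ 2) :=
    mul_le_mul_of_nonneg_left hCS hδ
  rw [dot_mulVec_split]
  have egoal : ∑ q, c q / 2 * (s q * euNorm (vblk v q) ^ 2) = ∑ q, c q / 2 * (s q * N q) := rfl
  rw [egoal]
  have efin : ∑ q, c q * s q * N q - ∑ q, c q / 2 * (s q * N q)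
      = ∑ q, c q / 2 * (s q * N q) := by
    rw [← Finset.sum_sub_distrib]
    refine Finset.sum_congr rfl fun q _ => by ring
  rw [e1] at hsum
  have : δ * (Qn * ∑ q, P q ^ 2) ≤ ∑ q, c q / 2 * (s q * N q) := by
    rw [hPsum]
    calc δ * (Qn * ∑ q, s q * N q) = δ * Qn * ∑ q, s q * N q := by ring
      _ = ∑ q, δ * Qn * (s q * N q) := hfin2
      _ ≤ _ := hfin
  linarith [hsum, hmul, this, efin]

lemma inv_form {Qn : ℕ} {m : Fin Qn → ℕ}
    (D B : Matrix ((q : Fin Qn) × Fin (m q)) ((q : Fin Qn) × Fin (m q)) ℝ)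
    (hDB : D * B = 1)
    (s c : Fin Qn → ℝ) (hs : ∀ q, 0 < s q) (hc : ∀ q, 0 < c q)
    (hcoer : ∀ v, ∑ q, c q / 2 * (s q * euNorm (vblk v q) ^ 2)
      ≤ dotProduct v (D.mulVec v))
    (w : ((q : Fin Qn) × Fin (m q)) → ℝ) :
    0 ≤ dotProduct w (B.mulVec w) ∧
    dotProduct w (B.mulVec w) ≤ ∑ q, 2 / (c q * s q) * euNorm (vblk w q) ^ 2 := by
  classical
  set v := B.mulVec w with hvdef
  have hv : D.mulVec v = w := by
    rw [hvdef, Matrix.mulVec_mulVec, hDB, Matrix.one_mulVec]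
  have hX : dotProduct w v = dotProduct v (D.mulVec v) := by
    rw [hv, dotProduct_comm]
  set a : Fin Qn → ℝ := fun q => c q / 2 * s q with hadef
  have ha : ∀ q, 0 < a q := fun q => by
    have := hc q; have := hs q; rw [hadef]; positivity
  have h1 := hcoer v
  have h1' : ∑ q, a q * euNorm (vblk v q) ^ 2 ≤ dotProduct w v := by
    rw [hX]
    refine le_trans (le_of_eq ?_) h1
    exact Finset.sum_congr rfl fun q _ => by rw [hadef]; ring
  have hterm0 : ∀ q, 0 ≤ a q * euNorm (vblk v q) ^ 2 :=
    fun q => mul_nonneg (ha q).le (sq_nonneg _)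
  have hX0 : 0 ≤ dotProduct w v :=
    le_trans (Finset.sum_nonneg fun q _ => hterm0 q) h1'
  refine ⟨hX0, ?_⟩
  set u : Fin Qn → ℝ := fun q => euNorm (vblk w q) / Real.sqrt (a q) with hudef
  set t : Fin Qn → ℝ := fun q => Real.sqrt (a q) * euNorm (vblk v q) with htdef
  have hsq : ∀ q, (0:ℝ) < Real.sqrt (a q) := fun q => Real.sqrt_pos.mpr (ha q)
  have hut : ∀ q, euNorm (vblk w q) * euNorm (vblk v q) = u q * t q := by
    intro q
    rw [hudef, htdef]
    simp only
    rw [show euNorm (vblk w q) / Real.sqrt (a q) * (Real.sqrt (a q) * euNorm (vblk v q))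
        = euNorm (vblk w q) * euNorm (vblk v q) * (Real.sqrt (a q) / Real.sqrt (a q)) by ring,
      div_self (hsq q).ne', mul_one]
  have hdotle : dotProduct w v ≤ ∑ q, u q * t q := by
    rw [dot_split]
    refine Finset.sum_le_sum fun q _ => ?_
    rw [← hut q]
    exact dot_le_enorm _ _
  have hCS := Finset.sum_mul_sq_le_sq_mul_sq Finset.univ u t
  have ht2 : ∑ q, t q ^ 2 = ∑ q, a q * euNorm (vblk v q) ^ 2 := by
    refine Finset.sum_congr rfl fun q _ => ?_
    rw [htdef]; simp only
    rw [mul_pow, Real.sq_sqrt (ha q).le]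
  have hu2 : ∑ q, u q ^ 2 = ∑ q, 2 / (c q * s q) * euNorm (vblk w q) ^ 2 := by
    refine Finset.sum_congr rfl fun q _ => ?_
    rw [hudef, hadef]; simp only
    rw [div_pow, Real.sq_sqrt (ha q).le, hadef]
    have := (hc q).ne'
    have := (hs q).ne'
    field_simp
  set X := dotProduct w v with hXdef
  set A := ∑ q, 2 / (c q * s q) * euNorm (vblk w q) ^ 2 with hAdef
  have hA0 : 0 ≤ A := by
    rw [hAdef]
    refine Finset.sum_nonneg fun q _ => ?_
    have := hc q; have := hs q; positivity
  have hS : ∑ q, t q ^ 2 ≤ X := by rw [ht2]; exact h1'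
  have hS0 : 0 ≤ ∑ q, t q ^ 2 := Finset.sum_nonneg fun q _ => sq_nonneg _
  have hXsq : X ^ 2 ≤ A * X := by
    have h2 : X ^ 2 ≤ (∑ q, u q * t q) ^ 2 := by
      have h3 : 0 ≤ ∑ q, u q * t q := le_trans hX0 hdotle
      nlinarith [hdotle]
    calc X ^ 2 ≤ (∑ q, u q * t q) ^ 2 := h2
      _ ≤ (∑ q, u q ^ 2) * ∑ q, t q ^ 2 := hCS
      _ = A * ∑ q, t q ^ 2 := by rw [hu2]
      _ ≤ A * X := mul_le_mul_of_nonneg_left hS hA0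
  rcases eq_or_lt_of_le hX0 with h0 | h0
  · rw [← h0]; exact hA0
  · nlinarith [hXsq]

lemma euNorm_zero {ι : Type*} [Fintype ι] : euNorm (0 : ι → ℝ) = 0 := by
  rw [euNorm_eq]; simp

lemma sum_mulVec' {n p κ : Type*} [Fintype n] [Fintype p] (t : Finset κ)
    (M : κ → Matrix p n ℝ) (y : n → ℝ) :
    (∑ r ∈ t, M r).mulVec y = ∑ r ∈ t, (M r).mulVec y := by
  classical
  induction t using Finset.cons_induction with
  | empty => simp [Matrix.mulVec]
  | cons a tt ha ih =>
    rw [Finset.sum_cons, Finset.sum_cons, Matrix.add_mulVec, ih]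

lemma sqrt_alg {sq sr sq' c' δ E : ℝ} (hsq : 0 < sq) (hsr : 0 < sr) (hsq' : 0 < sq')
    (hc' : 0 < c') :
    (δ * Real.sqrt (sq * sr)) * ((2 / (c' * Real.sqrt (sr * sq'))) * E)
      = 2 * δ * sq / (c' * Real.sqrt (sq * sq')) * E := by
  have haq : Real.sqrt sq ^ 2 = sq := Real.sq_sqrt hsq.le
  have haq0 : (0:ℝ) < Real.sqrt sq := Real.sqrt_pos.mpr hsq
  have har0 : (0:ℝ) < Real.sqrt sr := Real.sqrt_pos.mpr hsr
  have haq'0 : (0:ℝ) < Real.sqrt sq' := Real.sqrt_pos.mpr hsq'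
  rw [Real.sqrt_mul hsq.le, Real.sqrt_mul hsr.le, Real.sqrt_mul hsq.le, ← haq]
  field_simp
  linear_combination δ * E * Real.sq_sqrt (sq_nonneg (Real.sqrt sq))

lemma final_alg {cq sq ss c' δ X E Qn' : ℝ} (hcq : 0 < cq) (hsq : 0 < sq) (hss : 0 < ss)
    (hc' : 0 < c') (hc'cq : c' ≤ cq) (hQ : 0 ≤ Qn') (hδ : 0 ≤ δ) (hE : 0 ≤ E)
    (h : cq * sq * X ≤ Qn' * (2 * δ * sq / (c' * ss) * E)) :
    X ≤ 2 * Qn' / c' ^ 2 * δ / ss * E := by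
  have h2 : Qn' * (2 * δ * sq / (c' * ss) * E)
      ≤ cq * sq * (2 * Qn' / c' ^ 2 * δ / ss * E) := by
    have e1 : Qn' * (2 * δ * sq / (c' * ss) * E) = 2 * Qn' * δ * sq * E / (c' * ss) := by
      ring
    have e2 : cq * sq * (2 * Qn' / c' ^ 2 * δ / ss * E)
        = 2 * cq * sq * Qn' * δ * E / (c' ^ 2 * ss) := by
      ring
    rw [e1, e2, div_le_div_iff₀ (mul_pos hc' hss) (mul_pos (pow_pos hc' 2) hss)]
    nlinarith [mul_nonneg (mul_nonneg (mul_nonneg (mul_nonneg (mul_nonneg hQ hδ) hsq.le) hE)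
      hss.le) (mul_nonneg hc'.le (sub_nonneg.mpr hc'cq))]
  exact (mul_le_mul_iff_of_pos_left (mul_pos hcq hsq)).mp (le_trans h h2)


/-- Block-matrix inversion bounds: if `D` is an invertible symmetric `Q×Q` block matrix
whose diagonal blocks satisfy `c_q s_q ≤ λ_min(D^{qq}) ≤ λ_max(D^{qq}) ≤ C_q s_q` and
whose off-diagonal blocks satisfy `σ_max(D^{qq'}) ≤ δ √(s_q s_{q'})` for sufficiently
small `δ`, then `B = D⁻¹` satisfies `‖B^{qq}‖_op = O(1/s_q)` and
`‖B^{qq'}‖_op = O(δ/√(s_q s_{q'}))` for `q ≠ q'`, with constants depending only on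
`Q`, `c`, `C`. -/
theorem block_inverse_bounds
    (Qn : ℕ) (m : Fin Qn → ℕ)
    (c C : Fin Qn → ℝ) (hc : ∀ q, 0 < c q) (hC : ∀ q, 0 < C q) :
    ∃ δ0 : ℝ, 0 < δ0 ∧ ∃ K : ℝ, 0 < K ∧
      ∀ (s : Fin Qn → ℝ), (∀ q, 0 < s q) →
      ∀ δ : ℝ, 0 < δ → δ ≤ δ0 →
      ∀ D : Matrix ((q : Fin Qn) × Fin (m q)) ((q : Fin Qn) × Fin (m q)) ℝ,
        D.IsSymm → IsUnit D.det →
        (∀ q, ∀ v : Fin (m q) → ℝ,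
          c q * s q * (∑ i, v i ^ 2)
            ≤ dotProduct v (Matrix.mulVec (blk D q q) v)) →
        (∀ q, ∀ v : Fin (m q) → ℝ,
          dotProduct v (Matrix.mulVec (blk D q q) v)
            ≤ C q * s q * (∑ i, v i ^ 2)) →
        (∀ q q', q ≠ q' →
          matOpNorm (blk D q q') ≤ δ * Real.sqrt (s q * s q')) →
        (∀ q, matOpNorm (blk D⁻¹ q q) ≤ K / s q) ∧
        (∀ q q', q ≠ q' →
          matOpNorm (blk D⁻¹ q q') ≤ K * δ / Real.sqrt (s q * s q')) := by
  classical
  rcases Nat.eq_zero_or_pos Qn with h0 | hQpos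
  · subst h0
    exact ⟨1, one_pos, 1, one_pos, fun s _ δ _ _ D _ _ _ _ _ =>
      ⟨fun q => q.elim0, fun q => q.elim0⟩⟩
  have hne : (Finset.univ : Finset (Fin Qn)).Nonempty :=
    ⟨⟨0, hQpos⟩, Finset.mem_univ _⟩
  set c' : ℝ := min 1 (Finset.univ.inf' hne c) with hc'def
  have hc'le : ∀ q, c' ≤ c q := fun q =>
    le_trans (min_le_right _ _) (Finset.inf'_le c (Finset.mem_univ q))
  have hc'le1 : c' ≤ 1 := min_le_left _ _
  have hc'pos : 0 < c' := by
    apply lt_min one_pos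
    rw [Finset.lt_inf'_iff]
    exact fun q _ => hc q
  refine ⟨c' / (2 * (Qn + 1)), by positivity, 2 * Qn / c' ^ 2 + 2 / c', by positivity,
    fun s hs δ hδ hδ0 D hsym hdet hlow hupp hoff => ?_⟩
  set K : ℝ := 2 * Qn / c' ^ 2 + 2 / c' with hKdef
  set B : Matrix ((q : Fin Qn) × Fin (m q)) ((q : Fin Qn) × Fin (m q)) ℝ := D⁻¹ with hBdef
  have hDB : D * B = 1 := Matrix.mul_nonsing_inv D hdet
  have hBsym : B.IsSymm := by
    rw [hBdef, Matrix.IsSymm, Matrix.transpose_nonsing_inv, hsym.eq]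
  have hsmall : ∀ q, δ * Qn ≤ c q / 2 := by
    intro q
    have h1 : (0:ℝ) ≤ (Qn : ℝ) := Nat.cast_nonneg _
    have h2 : δ * Qn ≤ c' / (2 * (Qn + 1)) * Qn :=
      mul_le_mul_of_nonneg_right hδ0 h1
    have h3 : c' / (2 * ((Qn:ℝ) + 1)) * Qn ≤ c' / 2 := by
      rw [div_mul_eq_mul_div, div_le_div_iff₀ (by positivity) (by norm_num)]
      nlinarith [hc'pos]
    have h4 : c' / 2 ≤ c q / 2 := by linarith [hc'le q]
    calc δ * Qn ≤ c' / (2 * ((Qn:ℝ) + 1)) * Qn := by exact_mod_cast h2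
      _ ≤ c' / 2 := h3
      _ ≤ c q / 2 := h4
  have hcoer := coercive D s c δ hδ.le hs hlow hoff hsmall
  have hform := fun w => inv_form D B hDB s c hs hc hcoer w
  have hpos : ∀ w, 0 ≤ dotProduct w (B.mulVec w) := fun w => (hform w).1
  -- collapse the quadratic upper bound for embedded vectors
  have hformE : ∀ (q : Fin Qn) (x : Fin (m q) → ℝ),
      dotProduct (emb q x) (B.mulVec (emb q x))
        ≤ 2 / (c q * s q) * euNorm x ^ 2 := by
    intro q x
    refine le_trans (hform (emb q x)).2 (le_of_eq ?_)
    rw [Finset.sum_eq_single q]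
    · rw [vblk_emb_self]
    · intro r _ hr
      rw [vblk_emb_ne hr, euNorm_zero]
      ring
    · intro h; exact absurd (Finset.mem_univ q) h
  -- a priori bound on all blocks of B
  have hkey : ∀ (q q' : Fin Qn), matOpNorm (blk B q q') ≤ 2 / (c' * Real.sqrt (s q * s q')) := by
    intro q q'
    have hsqrtpos : 0 < Real.sqrt (s q * s q') :=
      Real.sqrt_pos.mpr (mul_pos (hs q) (hs q'))
    apply matOpNorm_le_of_dot _ (by positivity)
    intro x y
    set W : ℝ := 2 / (c' * Real.sqrt (s q * s q')) * euNorm x * euNorm y with hWdef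
    have hW0 : 0 ≤ W := by
      rw [hWdef]
      have := euNorm_nonneg x; have := euNorm_nonneg y
      positivity
    have hZ : dotProduct x ((blk B q q').mulVec y)
        = dotProduct (emb q x) (B.mulVec (emb q' y)) :=
      (dot_emb_mulVec B q q' x y).symm
    have hcs := psd_cs B hBsym hpos (emb q x) (emb q' y)
    have hXb := hformE q x
    have hYb := hformE q' y
    have hX0 := hpos (emb q x)
    have hY0 := hpos (emb q' y)
    have hprod : dotProduct (emb q x) (B.mulVec (emb q x))
        * dotProduct (emb q' y) (B.mulVec (emb q' y)) ≤ W ^ 2 := by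
      have hb1 : (0:ℝ) ≤ 2 / (c q * s q) * euNorm x ^ 2 := by
        have := hc q; have := hs q; have := euNorm_nonneg x; positivity
      have step : dotProduct (emb q x) (B.mulVec (emb q x))
          * dotProduct (emb q' y) (B.mulVec (emb q' y))
          ≤ (2 / (c q * s q) * euNorm x ^ 2) * (2 / (c q' * s q') * euNorm y ^ 2) :=
        mul_le_mul hXb hYb hY0 hb1
      refine le_trans step ?_
      have hsq2 : Real.sqrt (s q * s q') ^ 2 = s q * s q' :=
        Real.sq_sqrt (mul_pos (hs q) (hs q')).le
      rw [hWdef]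
      have expand : (2 / (c' * Real.sqrt (s q * s q')) * euNorm x * euNorm y) ^ 2
          = 4 / (c' ^ 2 * (s q * s q')) * (euNorm x ^ 2 * euNorm y ^ 2) := by
        rw [mul_pow, mul_pow, div_pow, mul_pow, hsq2]
        ring
      rw [expand]
      have halg : (2 / (c q * s q)) * (2 / (c q' * s q'))
          ≤ 4 / (c' ^ 2 * (s q * s q')) := by
        have h1 := hc'le q; have h2 := hc'le q'
        have h3 := hs q; have h4 := hs q'
        have hd1 : 0 < c q * s q * (c q' * s q') :=
          mul_pos (mul_pos (hc q) h3) (mul_pos (hc q') h4)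
        have hd2 : 0 < c' ^ 2 * (s q * s q') :=
          mul_pos (pow_pos hc'pos 2) (mul_pos h3 h4)
        rw [div_mul_div_comm, div_le_div_iff₀ hd1 hd2]
        nlinarith [mul_le_mul h1 h2 hc'pos.le (hc q).le, mul_pos h3 h4]
      calc 2 / (c q * s q) * euNorm x ^ 2 * (2 / (c q' * s q') * euNorm y ^ 2)
          = (2 / (c q * s q)) * (2 / (c q' * s q')) * (euNorm x ^ 2 * euNorm y ^ 2) := by ring
        _ ≤ 4 / (c' ^ 2 * (s q * s q')) * (euNorm x ^ 2 * euNorm y ^ 2) := by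
            have := euNorm_nonneg x; have := euNorm_nonneg y
            apply mul_le_mul_of_nonneg_right halg (by positivity)
    have hZ2 : dotProduct x ((blk B q q').mulVec y) ^ 2 ≤ W ^ 2 := by
      rw [hZ]; exact le_trans hcs hprod
    have := Real.sqrt_le_sqrt hZ2
    rw [Real.sqrt_sq_eq_abs, Real.sqrt_sq hW0] at this
    calc dotProduct x ((blk B q q').mulVec y)
        ≤ |dotProduct x ((blk B q q').mulVec y)| := le_abs_self _
      _ ≤ W := this
  constructor
  · intro q
    have h := hkey q q
    rw [Real.sqrt_mul_self (hs q).le] at h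
    refine le_trans h ?_
    have e : 2 / (c' * s q) = (2 / c') / s q := by
      rw [div_div]
    rw [e]
    have hK2 : 2 / c' ≤ K := by
      rw [hKdef]
      have : (0:ℝ) ≤ 2 * Qn / c' ^ 2 := by positivity
      linarith
    exact (div_le_div_iff_of_pos_right (hs q)).mpr hK2
  · intro q q' hqq'
    have hsqrtpos : 0 < Real.sqrt (s q * s q') :=
      Real.sqrt_pos.mpr (mul_pos (hs q) (hs q'))
    have hblkzero : ∑ r, blk D q r * blk B r q' = 0 := by
      rw [← blk_mul, hDB, blk_one_ne hqq']
    have hsplit : ∑ r, blk D q r * blk B r q'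
        = blk D q q * blk B q q' + ∑ r ∈ Finset.univ.erase q, blk D q r * blk B r q' :=
      (Finset.add_sum_erase Finset.univ _ (Finset.mem_univ q)).symm
    have hid : blk D q q * blk B q q'
        = -∑ r ∈ Finset.univ.erase q, blk D q r * blk B r q' := by
      rw [hsplit] at hblkzero
      exact eq_neg_of_add_eq_zero_left hblkzero
    set bnd : ℝ := 2 * δ * s q / (c' * Real.sqrt (s q * s q')) with hbnddef
    have hbnd0 : 0 ≤ bnd := by
      rw [hbnddef]
      have := hs q
      positivity
    have hvec : ∀ y : Fin (m q') → ℝ,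
        euNorm ((blk B q q').mulVec y) ≤ 2 * Qn / c' ^ 2 * δ / Real.sqrt (s q * s q') * euNorm y := by
      intro y
      have hge := euNorm_mulVec_ge (blk D q q) (mul_pos (hc q) (hs q)).le (hlow q)
        ((blk B q q').mulVec y)
      have e1 : (blk D q q).mulVec ((blk B q q').mulVec y)
          = -(∑ r ∈ Finset.univ.erase q, ((blk D q r) * (blk B r q')).mulVec y) := by
        rw [Matrix.mulVec_mulVec, hid, Matrix.neg_mulVec, sum_mulVec']
      rw [e1, euNorm_neg] at hge
      have e3 : ∀ r ∈ Finset.univ.erase q,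
          euNorm (((blk D q r) * (blk B r q')).mulVec y) ≤ bnd * euNorm y := by
        intro r hr
        have hrq : q ≠ r := Ne.symm (Finset.mem_erase.mp hr).1
        have step1 : euNorm (((blk D q r) * (blk B r q')).mulVec y)
            ≤ (δ * Real.sqrt (s q * s r)) * ((2 / (c' * Real.sqrt (s r * s q'))) * euNorm y) := by
          rw [← Matrix.mulVec_mulVec]
          calc euNorm ((blk D q r).mulVec ((blk B r q').mulVec y))
              ≤ matOpNorm (blk D q r) * euNorm ((blk B r q').mulVec y) := mulVec_enorm_le _ _
            _ ≤ matOpNorm (blk D q r) * (matOpNorm (blk B r q') * euNorm y) :=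
                mul_le_mul_of_nonneg_left (mulVec_enorm_le _ _) (matOpNorm_nonneg _)
            _ ≤ (δ * Real.sqrt (s q * s r)) * ((2 / (c' * Real.sqrt (s r * s q'))) * euNorm y) := by
                refine mul_le_mul (hoff q r hrq) ?_ ?_ ?_
                · exact mul_le_mul_of_nonneg_right (hkey r q') (euNorm_nonneg _)
                · exact mul_nonneg (matOpNorm_nonneg _) (euNorm_nonneg _)
                · positivity
        refine le_trans step1 (le_of_eq ?_)
        rw [hbnddef]
        exact sqrt_alg (hs q) (hs r) (hs q') hc'pos
      have e2 : euNorm (∑ r ∈ Finset.univ.erase q, ((blk D q r) * (blk B r q')).mulVec y)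
          ≤ ∑ r ∈ Finset.univ.erase q, euNorm (((blk D q r) * (blk B r q')).mulVec y) :=
        euNorm_sum_le _ _
      have e4 : ∑ r ∈ Finset.univ.erase q, euNorm (((blk D q r) * (blk B r q')).mulVec y)
          ≤ Qn * (bnd * euNorm y) := by
        calc ∑ r ∈ Finset.univ.erase q, euNorm (((blk D q r) * (blk B r q')).mulVec y)
            ≤ ∑ r ∈ Finset.univ.erase q, bnd * euNorm y := Finset.sum_le_sum e3
          _ = (Finset.univ.erase q).card * (bnd * euNorm y) := by
              rw [Finset.sum_const, nsmul_eq_mul]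
          _ ≤ Qn * (bnd * euNorm y) := by
              refine mul_le_mul_of_nonneg_right ?_ (mul_nonneg hbnd0 (euNorm_nonneg _))
              have : (Finset.univ.erase q).card ≤ Qn := by
                calc (Finset.univ.erase q).card ≤ (Finset.univ : Finset (Fin Qn)).card :=
                      Finset.card_le_card (Finset.erase_subset _ _)
                  _ = Qn := by simp
              exact_mod_cast this
      have hchain : c q * s q * euNorm ((blk B q q').mulVec y) ≤ Qn * (bnd * euNorm y) :=
        le_trans hge (le_trans e2 e4)
      rw [hbnddef] at hchain
      exact final_alg (hc q) (hs q) hsqrtpos hc'pos (hc'le q) (Nat.cast_nonneg _) hδ.le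
        (euNorm_nonneg y) hchain
    have hbig : matOpNorm (blk B q q') ≤ 2 * Qn / c' ^ 2 * δ / Real.sqrt (s q * s q') := by
      refine matOpNorm_le _ ?_ hvec
      positivity
    refine le_trans hbig ?_
    have hKK : 2 * (Qn:ℝ) / c' ^ 2 ≤ K := by
      rw [hKdef]
      have : (0:ℝ) ≤ 2 / c' := by positivity
      linarith
    exact (div_le_div_iff_of_pos_right hsqrtpos).mpr (mul_le_mul_of_nonneg_right hKK hδ.le)
end
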